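/- Define g_a(b) := b² ∫_ℝ (1/(exp(2a·y)+1))² φ(y−b) dy for a, b ∈ ℝ. Then for every c with 0 < c < τ*, one has g_c(τ*) > g_{τ*}(τ*): the worst-case point τ* yields strictly larger mean square regret under the logistic rule with coefficient c than under the logistic rule with coefficient τ*. -/

import Mathlib

open Real MeasureTheory

/-- The standard normal density. -/
noncomputable def gaussPdf (x : ℝ) : ℝ :=
  (Real.sqrt (2 * Real.pi))⁻¹ * Real.exp (-(x ^ 2) / 2)

/-- ρ(a) = ∫ (1/(exp(2ay)+1))² φ(y−a) dy. -/
noncomputable def ρ (a : ℝ) : ℝ :=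
  ∫ y : ℝ, (1 / (Real.exp (2 * a * y) + 1)) ^ 2 * gaussPdf (y - a)

/-- g_a(b) = b² ∫ (1/(exp(2ay)+1))² φ(y−b) dy. -/
noncomputable def g (a b : ℝ) : ℝ :=
  b ^ 2 * ∫ y : ℝ, (1 / (Real.exp (2 * a * y) + 1)) ^ 2 * gaussPdf (y - b)

open Set

lemma gaussPdf_pos (x : ℝ) : 0 < gaussPdf x := by
  apply mul_pos (inv_pos.2 (Real.sqrt_pos.2 (by positivity))) (Real.exp_pos _)

lemma continuous_gaussPdf : Continuous gaussPdf := by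
  unfold gaussPdf; fun_prop

lemma integrable_gaussPdf_shift (b : ℝ) : Integrable (fun y : ℝ => gaussPdf (y - b)) := by
  unfold gaussPdf
  have h : Integrable (fun y : ℝ => Real.exp (-((1:ℝ)/2) * y ^ 2)) :=
    integrable_exp_neg_mul_sq (by norm_num)
  have := (h.comp_sub_right b).const_mul (Real.sqrt (2 * Real.pi))⁻¹
  simpa [mul_comm, neg_div, neg_mul, mul_div_assoc, div_eq_mul_inv] using this

noncomputable def itg (a b y : ℝ) : ℝ :=
  (1 / (Real.exp (2 * a * y) + 1)) ^ 2 * gaussPdf (y - b)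

lemma integrable_itg (a b : ℝ) : Integrable (fun y => itg a b y) := by
  have hm : AEStronglyMeasurable (fun y => itg a b y) volume := by
    apply Continuous.aestronglyMeasurable
    unfold itg
    have h1 : Continuous fun y : ℝ => Real.exp (2 * a * y) + 1 := by fun_prop
    have h2 : Continuous fun y : ℝ => y - b := by fun_prop
    have := ((h1.inv₀ (fun y => by positivity)).pow 2).mul (continuous_gaussPdf.comp h2)
    exact this.congr (fun y => by simp [one_div])
  refine (integrable_gaussPdf_shift b).mono hm ?_
  filter_upwards with y
  rw [Real.norm_eq_abs, Real.norm_eq_abs, abs_of_pos (gaussPdf_pos _)]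
  unfold itg
  rw [abs_mul, abs_of_pos (gaussPdf_pos _)]
  have h1 : (1 / (Real.exp (2 * a * y) + 1)) ^ 2 ≤ 1 := by
    have := Real.exp_pos (2 * a * y)
    rw [div_pow, one_pow, div_le_one (by positivity)]
    nlinarith
  have h0 : (0:ℝ) ≤ (1 / (Real.exp (2 * a * y) + 1)) ^ 2 := by positivity
  rw [abs_of_nonneg h0]
  nlinarith [gaussPdf_pos (y - b)]

lemma integrable_itg_neg (a b : ℝ) : Integrable (fun y => itg a b (-y)) := by
  have h := ((Measure.measurePreserving_neg (volume : Measure ℝ)).integrable_comp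
    (integrable_itg a b).aestronglyMeasurable).2 (integrable_itg a b)
  simpa [Function.comp_def] using h

lemma key_alg (Ec Eb A : ℝ) (h1 : 1 < Ec) (h2 : Ec < Eb) (hA : 0 < A) :
    (1 / (Eb + 1)) ^ 2 * A + (1 / (Eb⁻¹ + 1)) ^ 2 * (Eb⁻¹ * A)
      < (1 / (Ec + 1)) ^ 2 * A + (1 / (Ec⁻¹ + 1)) ^ 2 * (Eb⁻¹ * A) := by
  have h0c : 0 < Ec := by linarith
  have h0b : 0 < Eb := by linarith
  rw [← sub_pos]
  have heq : (1 / (Ec + 1)) ^ 2 * A + (1 / (Ec⁻¹ + 1)) ^ 2 * (Eb⁻¹ * A)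
      - ((1 / (Eb + 1)) ^ 2 * A + (1 / (Eb⁻¹ + 1)) ^ 2 * (Eb⁻¹ * A))
      = A * (Eb - Ec) ^ 2 / (Eb * (Ec + 1) ^ 2 * (Eb + 1)) := by
    field_simp
    ring
  rw [heq]
  have hne : Eb - Ec ≠ 0 := by linarith
  have : (0:ℝ) < (Eb - Ec) ^ 2 := by positivity
  positivity

lemma itg_pair_lt (b c y : ℝ) (hc : 0 < c) (hcb : c < b) (hy : 0 < y) :
    itg b b y + itg b b (-y) < itg c b y + itg c b (-y) := by
  have hg : gaussPdf (-y - b) = (Real.exp (2 * b * y))⁻¹ * gaussPdf (y - b) := by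
    unfold gaussPdf
    rw [← Real.exp_neg]
    have h : -(-y - b) ^ 2 / 2 = -(2 * b * y) + -(y - b) ^ 2 / 2 := by ring
    rw [h, Real.exp_add]
    ring
  have hEc : Real.exp (2 * c * y) < Real.exp (2 * b * y) := by
    apply Real.exp_lt_exp.2; nlinarith
  have hEc1 : 1 < Real.exp (2 * c * y) := by
    rw [show (1:ℝ) = Real.exp 0 by simp]
    apply Real.exp_lt_exp.2; nlinarith
  unfold itg
  rw [show 2 * b * -y = -(2 * b * y) by ring, show 2 * c * -y = -(2 * c * y) by ring,
    Real.exp_neg, Real.exp_neg, hg]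
  exact key_alg _ _ _ hEc1 hEc (gaussPdf_pos _)

lemma integral_itg_split (a b : ℝ) :
    (∫ y, itg a b y) = ∫ x in Ioi (0:ℝ), (itg a b (-x) + itg a b x) := by
  have hI := integrable_itg a b
  have h1 : (∫ x in Iic (0:ℝ), itg a b x) = ∫ x in Ioi (0:ℝ), itg a b (-x) := by
    rw [integral_comp_neg_Ioi]; norm_num
  rw [← intervalIntegral.integral_Iic_add_Ioi hI.integrableOn hI.integrableOn, h1,
    ← integral_add (integrable_itg_neg a b).integrableOn hI.integrableOn]

/-- For every 0 < c < τ*, g_c(τ*) > g_{τ*}(τ*). -/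
theorem stmt_17 (τstar : ℝ) (hτ0 : 0 ≤ τstar)
    (hτmax : ∀ τ : ℝ, 0 ≤ τ → τ ^ 2 * ρ τ ≤ τstar ^ 2 * ρ τstar) :
    ∀ c : ℝ, 0 < c → c < τstar → g τstar τstar < g c τstar := by
  intro c hc hcb
  set b := τstar with hbdef
  have hb : 0 < b := lt_trans hc hcb
  have key : (∫ y, itg b b y) < ∫ y, itg c b y := by
    rw [integral_itg_split b b, integral_itg_split c b]
    have hpos : 0 < ∫ x in Ioi (0:ℝ),
        ((itg c b (-x) + itg c b x) - (itg b b (-x) + itg b b x)) := by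
      rw [setIntegral_pos_iff_support_of_nonneg_ae]
      · refine lt_of_lt_of_le ?_ (measure_mono (fun x hx =>
          ⟨?_, hx⟩ : Ioi (0:ℝ) ⊆ _ ∩ Ioi 0))
        · rw [Real.volume_Ioi]; exact ENNReal.zero_lt_top
        · have := itg_pair_lt b c x hc hcb hx
          simp only [Function.mem_support]
          intro h
          have : itg c b (-x) + itg c b x = itg b b (-x) + itg b b x := by linarith [sub_eq_zero.mp h]
          linarith
      · filter_upwards [ae_restrict_mem measurableSet_Ioi] with x hx
        have := itg_pair_lt b c x hc hcb hx
        simp only [Pi.zero_apply]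
        linarith
      · exact (((integrable_itg_neg c b).add (integrable_itg c b)).sub
          ((integrable_itg_neg b b).add (integrable_itg b b))).integrableOn
    have hIc2 : IntegrableOn (fun x => itg c b (-x) + itg c b x) (Ioi 0) volume :=
      ((integrable_itg_neg c b).add (integrable_itg c b)).integrableOn
    have hIb2 : IntegrableOn (fun x => itg b b (-x) + itg b b x) (Ioi 0) volume :=
      ((integrable_itg_neg b b).add (integrable_itg b b)).integrableOn
    rw [integral_sub hIc2 hIb2] at hpos
    linarith
  unfold g
  have := mul_lt_mul_of_pos_left key (show (0:ℝ) < b ^ 2 by positivity)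
  exact this
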